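/- Let G be a finite simple graph and let e = uw be an edge of G, regarded as a vertex of the line graph L(G). Then the primitive degree of e in L(G) equals Λ + C(deg(u)−1, 2) + C(deg(w)−1, 2), where Λ is the number of triangles of G containing the edge e and deg denotes degree in G. -/

import Mathlib

/-- The primitive hole number of a simple graph: the number of triangles
(3-cliques) in the graph. -/
noncomputable def SimpleGraph.holeNumber {V : Type*} (G : SimpleGraph V) : ℕ :=
  {s : Finset V | G.IsNClique 3 s}.ncard

/-- The primitive degree of a vertex: the number of triangles (3-cliques)
of the graph containing that vertex. -/
noncomputable def SimpleGraph.primDegree {V : Type*} (G : SimpleGraph V) (v : V) : ℕ :=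
  {s : Finset V | G.IsNClique 3 s ∧ v ∈ s}.ncard

/-- The total graph of a simple graph `G`: vertices are the vertices and edges of `G`,
two of them adjacent iff the corresponding elements of `G` are adjacent or incident. -/
def SimpleGraph.totalGraph {V : Type*} (G : SimpleGraph V) :
    SimpleGraph (V ⊕ G.edgeSet) where
  Adj x y :=
    match x, y with
    | Sum.inl u, Sum.inl v => G.Adj u v
    | Sum.inl u, Sum.inr e => u ∈ (e : Sym2 V)
    | Sum.inr e, Sum.inl u => u ∈ (e : Sym2 V)
    | Sum.inr e, Sum.inr f => e ≠ f ∧ ∃ v, v ∈ (e : Sym2 V) ∧ v ∈ (f : Sym2 V)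
  symm := by
    refine ⟨?_⟩
    rintro (u | e) (v | f) h
    · exact G.adj_symm h
    · exact h
    · exact h
    · exact ⟨h.1.symm, h.2.imp fun v hv => ⟨hv.2, hv.1⟩⟩
  loopless := by
    refine ⟨?_⟩
    rintro (u | e) h
    · exact G.ne_of_adj h rfl
    · exact h.1 rfl

open Finset


lemma tri_struct {V : Type*} [DecidableEq V] {G : SimpleGraph V} (e₀ : G.edgeSet)
    (s : Finset G.edgeSet)
    (hs : G.lineGraph.IsNClique 3 s) (he : e₀ ∈ s) :
    ∃ f g : G.edgeSet, f ≠ g ∧ e₀ ≠ f ∧ e₀ ≠ g ∧ G.lineGraph.Adj e₀ f ∧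
      G.lineGraph.Adj e₀ g ∧ G.lineGraph.Adj f g ∧ s = {e₀, f, g} := by
  rw [SimpleGraph.is3Clique_iff] at hs
  obtain ⟨a, b, c, hab, hac, hbc, rfl⟩ := hs
  simp only [Finset.mem_insert, Finset.mem_singleton] at he
  rcases he with rfl | rfl | rfl
  · exact ⟨b, c, hbc.ne, hab.ne, hac.ne, hab, hac, hbc, rfl⟩
  · refine ⟨a, c, hac.ne, hab.ne', hbc.ne, hab.symm, hbc, hac, ?_⟩
    ext x; simp; tauto
  · refine ⟨a, b, hab.ne, hac.ne', hbc.ne', hac.symm, hbc.symm, hab, ?_⟩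
    ext x; simp; tauto



lemma star_count {V : Type*} [Fintype V] (G : SimpleGraph V) [DecidableRel G.Adj]
    (u w : V) (huw : G.Adj u w) :
    {s : Finset G.edgeSet | G.lineGraph.IsNClique 3 s ∧
        (⟨s(u, w), G.mem_edgeSet.mpr huw⟩ : G.edgeSet) ∈ s ∧
        ∀ f ∈ s, u ∈ (f : Sym2 V)}.ncard = (G.degree u - 1).choose 2 := by
  classical
  set e₀ : G.edgeSet := ⟨s(u, w), G.mem_edgeSet.mpr huw⟩ with he₀
  set Eu : Finset G.edgeSet := univ.filter (fun f => u ∈ (f : Sym2 V) ∧ f ≠ e₀) with hEu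
  have hu_e₀ : u ∈ (e₀ : Sym2 V) := by simp [he₀]
  -- card of Eu
  have hEu_card : Eu.card = G.degree u - 1 := by
    have : ((G.neighborFinset u).erase w).card = Eu.card := by
      apply Finset.card_bij (fun v hv => (⟨s(u, v), by
        simp only [mem_erase, SimpleGraph.mem_neighborFinset] at hv
        exact G.mem_edgeSet.mpr hv.2⟩ : G.edgeSet))
      · intro v hv
        simp only [mem_erase, SimpleGraph.mem_neighborFinset] at hv
        simp only [hEu, mem_filter, mem_univ, true_and]
        constructor
        · simp
        · intro h
          rw [Subtype.ext_iff] at h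
          simp only [he₀] at h
          rw [Sym2.eq_iff] at h
          rcases h with ⟨-, h⟩ | ⟨h, -⟩
          · exact hv.1 h
          · exact G.ne_of_adj huw h
      · intro v₁ hv₁ v₂ hv₂ h
        rw [Subtype.ext_iff, Sym2.eq_iff] at h
        simp only [mem_erase, SimpleGraph.mem_neighborFinset] at hv₁ hv₂
        rcases h with ⟨-, h⟩ | ⟨h, -⟩
        · exact h
        · exact absurd h (G.ne_of_adj hv₂.2)
      · rintro ⟨e, hemem⟩ hf
        simp only [hEu, mem_filter, mem_univ, true_and] at hf
        induction e using Sym2.ind with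
        | _ a b =>
          have hadj : G.Adj a b := hemem
          have hne : (⟨s(a, b), hemem⟩ : G.edgeSet) ≠ e₀ := hf.2
          have hmem : u ∈ s(a, b) := hf.1
          rw [Sym2.mem_iff] at hmem
          have key : ∀ (x y : V) (hxy : G.Adj x y), x = u →
              (s(x,y) : Sym2 V) = s(a, b) →
              ∃ v, ∃ hv : v ∈ (G.neighborFinset u).erase w,
                (⟨s(u, v), by
                  simp only [mem_erase, SimpleGraph.mem_neighborFinset] at hv
                  exact G.mem_edgeSet.mpr hv.2⟩ : G.edgeSet) = ⟨s(a, b), hemem⟩ := by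
            rintro x y hxy rfl hxyab
            refine ⟨y, ?_, ?_⟩
            · simp only [mem_erase, SimpleGraph.mem_neighborFinset]
              refine ⟨?_, hxy⟩
              intro hyw
              apply hne
              rw [Subtype.ext_iff]
              simp only [he₀]
              rw [← hxyab, hyw]
            · rw [Subtype.ext_iff]
              exact hxyab
          rcases hmem with rfl | rfl
          · obtain ⟨v, hv, h⟩ := key u b hadj rfl rfl
            exact ⟨v, hv, h⟩
          · obtain ⟨v, hv, h⟩ := key u a hadj.symm rfl (Sym2.eq_swap)
            exact ⟨v, hv, h⟩
    rw [← this, Finset.card_erase_of_mem (by simpa using huw), SimpleGraph.card_neighborFinset_eq_degree]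
  -- the set equals the image of 2-subsets of Eu under inserting e₀
  have himg : {s : Finset G.edgeSet | G.lineGraph.IsNClique 3 s ∧ e₀ ∈ s ∧
      ∀ f ∈ s, u ∈ (f : Sym2 V)} = (fun p => insert e₀ p) '' (↑(powersetCard 2 Eu) : Set (Finset G.edgeSet)) := by
    ext s
    simp only [Set.mem_setOf_eq, Set.mem_image, Finset.mem_coe, Finset.mem_powersetCard]
    constructor
    · rintro ⟨hclique, hmem, hall⟩
      obtain ⟨f', g', hfg, hef, heg, -, -, -, rfl⟩ := tri_struct e₀ s hclique hmem
      refine ⟨{f', g'}, ⟨?_, ?_⟩, rfl⟩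
      · intro x hx
        simp only [mem_insert, mem_singleton] at hx
        simp only [hEu, mem_filter, mem_univ, true_and]
        rcases hx with rfl | rfl
        · exact ⟨hall x (by simp), hef.symm⟩
        · exact ⟨hall x (by simp), heg.symm⟩
      · exact Finset.card_pair hfg
    · rintro ⟨p, ⟨hsub, hcard⟩, rfl⟩
      obtain ⟨f', g', hfg, rfl⟩ := Finset.card_eq_two.mp hcard
      have hf := hsub (by simp : f' ∈ ({f', g'} : Finset G.edgeSet))
      have hg := hsub (by simp : g' ∈ ({f', g'} : Finset G.edgeSet))
      simp only [hEu, mem_filter, mem_univ, true_and] at hf hg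
      refine ⟨?_, by simp, ?_⟩
      · rw [SimpleGraph.is3Clique_triple_iff]
        refine ⟨⟨Ne.symm hf.2, u, hu_e₀, hf.1⟩, ⟨Ne.symm hg.2, u, hu_e₀, hg.1⟩,
          ⟨hfg, u, hf.1, hg.1⟩⟩
      · intro x hx
        simp only [mem_insert, mem_singleton] at hx
        rcases hx with rfl | rfl | rfl
        · exact hu_e₀
        · exact hf.1
        · exact hg.1
  have hinj : Set.InjOn (fun p => insert e₀ p) (↑(powersetCard 2 Eu) : Set (Finset G.edgeSet)) := by
    intro p hp q hq h
    simp only [Finset.mem_coe, Finset.mem_powersetCard] at hp hq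
    have hpe : e₀ ∉ p := fun hmem => (by
      have := hp.1 hmem
      simp only [hEu, mem_filter] at this
      exact this.2.2 rfl)
    have hqe : e₀ ∉ q := fun hmem => (by
      have := hq.1 hmem
      simp only [hEu, mem_filter] at this
      exact this.2.2 rfl)
    have h' : insert e₀ p = insert e₀ q := h
    rw [← Finset.erase_insert hpe, ← Finset.erase_insert hqe, h']
  rw [show {s : Finset G.edgeSet | G.lineGraph.IsNClique 3 s ∧
      (⟨s(u, w), G.mem_edgeSet.mpr huw⟩ : G.edgeSet) ∈ s ∧
      ∀ f ∈ s, u ∈ (f : Sym2 V)} = {s : Finset G.edgeSet | G.lineGraph.IsNClique 3 s ∧ e₀ ∈ s ∧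
      ∀ f ∈ s, u ∈ (f : Sym2 V)} from rfl, himg,
    Set.ncard_image_of_injOn hinj, Set.ncard_coe_finset, Finset.card_powersetCard, hEu_card]


lemma tri_count {V : Type*} [Fintype V] (G : SimpleGraph V) [DecidableRel G.Adj]
    (u w : V) (huw : G.Adj u w) :
    {s : Finset G.edgeSet | G.lineGraph.IsNClique 3 s ∧
        (⟨s(u, w), G.mem_edgeSet.mpr huw⟩ : G.edgeSet) ∈ s ∧
        ¬(∀ f ∈ s, u ∈ (f : Sym2 V)) ∧ ¬(∀ f ∈ s, w ∈ (f : Sym2 V))}.ncard =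
      {v : V | G.Adj u v ∧ G.Adj w v}.ncard := by
  classical
  set e₀ : G.edgeSet := ⟨s(u, w), G.mem_edgeSet.mpr huw⟩ with he₀
  have huw' : u ≠ w := G.ne_of_adj huw
  set C : Set V := {v : V | G.Adj u v ∧ G.Adj w v} with hC
  set f3 : V → Finset G.edgeSet := fun v =>
    if h : G.Adj u v ∧ G.Adj w v then
      {e₀, ⟨s(u, v), G.mem_edgeSet.mpr h.1⟩, ⟨s(w, v), G.mem_edgeSet.mpr h.2⟩}
    else ∅ with hf3
  have key : ∀ f g : G.edgeSet, e₀ ≠ f → e₀ ≠ g → G.lineGraph.Adj f g →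
      u ∈ (f : Sym2 V) → w ∈ (g : Sym2 V) → ∃ v ∈ C, f3 v = {e₀, f, g} := by
    intro f g hef heg hadj huf hwg
    have hwf : w ∉ (f : Sym2 V) := by
      intro hwf
      exact hef (Subtype.ext ((Sym2.mem_and_mem_iff huw').mp ⟨huf, hwf⟩).symm)
    have hug : u ∉ (g : Sym2 V) := by
      intro hug
      exact heg (Subtype.ext (((Sym2.mem_and_mem_iff huw').mp ⟨hug, hwg⟩).symm.trans rfl))
    obtain ⟨x, hfx⟩ := Sym2.mem_iff_exists.mp huf
    obtain ⟨y, hgy⟩ := Sym2.mem_iff_exists.mp hwg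
    obtain ⟨-, t, htf, htg⟩ := SimpleGraph.lineGraph_adj_iff_exists.mp hadj
    rw [hfx, Sym2.mem_iff] at htf
    rw [hgy, Sym2.mem_iff] at htg
    have htx : t = x := by
      rcases htf with rfl | rfl
      · exact absurd (hgy ▸ Sym2.mem_iff.mpr (htg.imp id id)) hug
      · rfl
    have hty : t = y := by
      rcases htg with rfl | rfl
      · exact absurd (hfx ▸ Sym2.mem_iff.mpr (Or.inr htx)) hwf
      · rfl
    subst htx
    have hadj_u : G.Adj u t := G.mem_edgeSet.mp (hfx ▸ f.2)
    have hadj_w : G.Adj w t := G.mem_edgeSet.mp ((hty ▸ hgy) ▸ g.2)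
    refine ⟨t, ⟨hadj_u, hadj_w⟩, ?_⟩
    rw [hf3]
    simp only
    rw [dif_pos ⟨hadj_u, hadj_w⟩]
    have h1 : (⟨s(u, t), G.mem_edgeSet.mpr hadj_u⟩ : G.edgeSet) = f := Subtype.ext hfx.symm
    have h2 : (⟨s(w, t), G.mem_edgeSet.mpr hadj_w⟩ : G.edgeSet) = g :=
      Subtype.ext (hty ▸ hgy).symm
    rw [h1, h2]
  have himg : {s : Finset G.edgeSet | G.lineGraph.IsNClique 3 s ∧ e₀ ∈ s ∧
      ¬(∀ f ∈ s, u ∈ (f : Sym2 V)) ∧ ¬(∀ f ∈ s, w ∈ (f : Sym2 V))} = f3 '' C := by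
    ext s
    simp only [Set.mem_setOf_eq, Set.mem_image]
    constructor
    · rintro ⟨hclique, hmem, hnu, hnw⟩
      obtain ⟨f, g, hfg, hef, heg, haef, haeg, hafg, rfl⟩ := tri_struct e₀ s hclique hmem
      have hf_uw : u ∈ (f : Sym2 V) ∨ w ∈ (f : Sym2 V) := by
        obtain ⟨-, t, hte, htf⟩ := SimpleGraph.lineGraph_adj_iff_exists.mp haef
        rw [he₀] at hte
        rcases Sym2.mem_iff.mp hte with rfl | rfl
        · exact Or.inl htf
        · exact Or.inr htf
      have hg_uw : u ∈ (g : Sym2 V) ∨ w ∈ (g : Sym2 V) := by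
        obtain ⟨-, t, hte, htg⟩ := SimpleGraph.lineGraph_adj_iff_exists.mp haeg
        rw [he₀] at hte
        rcases Sym2.mem_iff.mp hte with rfl | rfl
        · exact Or.inl htg
        · exact Or.inr htg
      have hu_e₀ : u ∈ (e₀ : Sym2 V) := by rw [he₀]; simp
      have hw_e₀ : w ∈ (e₀ : Sym2 V) := by rw [he₀]; simp
      rcases hf_uw with huf | hwf <;> rcases hg_uw with hug | hwg
      · exfalso
        apply hnu
        intro x hx
        simp only [mem_insert, mem_singleton] at hx
        rcases hx with rfl | rfl | rfl
        exacts [hu_e₀, huf, hug]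
      · obtain ⟨v, hv, hv2⟩ := key f g hef heg hafg huf hwg
        exact ⟨v, hv, hv2⟩
      · obtain ⟨v, hv, hv2⟩ := key g f heg hef hafg.symm hug hwf
        refine ⟨v, hv, ?_⟩
        rw [hv2]
        ext x; simp only [mem_insert, mem_singleton]; tauto
      · exfalso
        apply hnw
        intro x hx
        simp only [mem_insert, mem_singleton] at hx
        rcases hx with rfl | rfl | rfl
        exacts [hw_e₀, hwf, hwg]
    · rintro ⟨v, hv, rfl⟩
      rw [hC, Set.mem_setOf_eq] at hv
      obtain ⟨hadj_u, hadj_w⟩ := hv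
      have hvu : v ≠ u := (G.ne_of_adj hadj_u).symm
      have hvw : v ≠ w := (G.ne_of_adj hadj_w).symm
      rw [hf3]; simp only
      rw [dif_pos ⟨hadj_u, hadj_w⟩]
      set a : G.edgeSet := ⟨s(u, v), G.mem_edgeSet.mpr hadj_u⟩ with ha
      set b : G.edgeSet := ⟨s(w, v), G.mem_edgeSet.mpr hadj_w⟩ with hb
      have hea : e₀ ≠ a := by
        intro h
        rw [Subtype.ext_iff, he₀, ha, Sym2.eq_iff] at h
        rcases h with ⟨-, h⟩ | ⟨h, -⟩
        · exact hvw h.symm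
        · exact hvu h.symm
      have heb : e₀ ≠ b := by
        intro h
        rw [Subtype.ext_iff, he₀, hb, Sym2.eq_iff] at h
        rcases h with ⟨h, -⟩ | ⟨h, -⟩
        · exact huw' h
        · exact hvu h.symm
      have hab : a ≠ b := by
        intro h
        rw [Subtype.ext_iff, ha, hb, Sym2.eq_iff] at h
        rcases h with ⟨h, -⟩ | ⟨-, h⟩
        · exact huw' h
        · exact hvw h
      refine ⟨?_, by simp, ?_, ?_⟩
      · rw [SimpleGraph.is3Clique_triple_iff]
        refine ⟨⟨hea, u, by rw [he₀]; simp, by rw [ha]; simp⟩,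
          ⟨heb, w, by rw [he₀]; simp, by rw [hb]; simp⟩,
          ⟨hab, v, by rw [ha]; simp, by rw [hb]; simp⟩⟩
      · intro h
        have := h b (by simp)
        rw [hb, Sym2.mem_iff] at this
        rcases this with h' | h'
        exacts [huw' h', hvu h'.symm]
      · intro h
        have := h a (by simp)
        rw [ha, Sym2.mem_iff] at this
        rcases this with h' | h'
        exacts [huw' h'.symm, hvw h'.symm]
  have hinj : Set.InjOn f3 C := by
    intro v hv v' hv' h
    rw [hC, Set.mem_setOf_eq] at hv hv'
    rw [hf3] at h
    simp only at h
    rw [dif_pos hv, dif_pos hv'] at h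
    have hmem : (⟨s(u, v'), G.mem_edgeSet.mpr hv'.1⟩ : G.edgeSet) ∈
        ({e₀, ⟨s(u, v), G.mem_edgeSet.mpr hv.1⟩, ⟨s(w, v), G.mem_edgeSet.mpr hv.2⟩} :
          Finset G.edgeSet) := by
      rw [h]; simp
    simp only [mem_insert, mem_singleton, Subtype.ext_iff, he₀] at hmem
    have hvu : v ≠ u := (G.ne_of_adj hv.1).symm
    have hvw : v ≠ w := (G.ne_of_adj hv.2).symm
    have hv'u : v' ≠ u := (G.ne_of_adj hv'.1).symm
    have hv'w : v' ≠ w := (G.ne_of_adj hv'.2).symm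
    rcases hmem with h' | h' | h' <;> rw [Sym2.eq_iff] at h'
    · rcases h' with ⟨-, h'⟩ | ⟨h', -⟩
      · exact absurd h' hv'w
      · exact absurd h' (G.ne_of_adj huw)
    · rcases h' with ⟨-, h'⟩ | ⟨h', -⟩
      · exact h'.symm
      · exact absurd h'.symm hvu
    · rcases h' with ⟨h', -⟩ | ⟨h', -⟩
      · exact absurd h' (G.ne_of_adj huw)
      · exact absurd h'.symm hvu
  rw [show {s : Finset G.edgeSet | G.lineGraph.IsNClique 3 s ∧
      (⟨s(u, w), G.mem_edgeSet.mpr huw⟩ : G.edgeSet) ∈ s ∧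
      ¬(∀ f ∈ s, u ∈ (f : Sym2 V)) ∧ ¬(∀ f ∈ s, w ∈ (f : Sym2 V))} =
    {s : Finset G.edgeSet | G.lineGraph.IsNClique 3 s ∧ e₀ ∈ s ∧
      ¬(∀ f ∈ s, u ∈ (f : Sym2 V)) ∧ ¬(∀ f ∈ s, w ∈ (f : Sym2 V))} from rfl, himg,
    Set.ncard_image_of_injOn hinj]

/-- The primitive degree of an edge `e = uw` of `G`, viewed as a vertex of the line
graph `L(G)`, equals `Λ + C(deg u - 1, 2) + C(deg w - 1, 2)`, where `Λ` is the number
of triangles of `G` containing `e`, i.e. the number of common neighbours of `u` and `w`. -/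
theorem primDegree_lineGraph {V : Type*} [Fintype V] (G : SimpleGraph V)
    [DecidableRel G.Adj] (u w : V) (huw : G.Adj u w) :
    G.lineGraph.primDegree ⟨s(u, w), G.mem_edgeSet.mpr huw⟩ =
      {v : V | G.Adj u v ∧ G.Adj w v}.ncard +
        (G.degree u - 1).choose 2 + (G.degree w - 1).choose 2 := by
  classical
  rw [SimpleGraph.primDegree]
  set e₀ : G.edgeSet := ⟨s(u, w), G.mem_edgeSet.mpr huw⟩ with he₀
  set S1 : Set (Finset G.edgeSet) := {s | G.lineGraph.IsNClique 3 s ∧ e₀ ∈ s ∧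
    ∀ f ∈ s, u ∈ (f : Sym2 V)} with hS1
  set S2 : Set (Finset G.edgeSet) := {s | G.lineGraph.IsNClique 3 s ∧ e₀ ∈ s ∧
    ∀ f ∈ s, w ∈ (f : Sym2 V)} with hS2
  set S3 : Set (Finset G.edgeSet) := {s | G.lineGraph.IsNClique 3 s ∧ e₀ ∈ s ∧
    ¬(∀ f ∈ s, u ∈ (f : Sym2 V)) ∧ ¬(∀ f ∈ s, w ∈ (f : Sym2 V))} with hS3
  have hsplit : {s : Finset G.edgeSet | G.lineGraph.IsNClique 3 s ∧ e₀ ∈ s} =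
      (S1 ∪ S2) ∪ S3 := by
    ext s
    simp only [hS1, hS2, hS3, Set.mem_union, Set.mem_setOf_eq]
    tauto
  have huw' : u ≠ w := G.ne_of_adj huw
  have d12 : Disjoint S1 S2 := by
    rw [Set.disjoint_left]
    rintro s ⟨hclique, hmem, hallu⟩ ⟨-, -, hallw⟩
    obtain ⟨f, g, -, hef, -, -, -, -, rfl⟩ := tri_struct e₀ s hclique hmem
    have hf : f ∈ ({e₀, f, g} : Finset G.edgeSet) := by simp
    exact hef (Subtype.ext
      ((Sym2.mem_and_mem_iff huw').mp ⟨hallu f hf, hallw f hf⟩).symm)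
  have d123 : Disjoint (S1 ∪ S2) S3 := by
    rw [Set.disjoint_left]
    rintro s (⟨-, -, hall⟩ | ⟨-, -, hall⟩) ⟨-, -, hnu, hnw⟩
    exacts [hnu hall, hnw hall]
  have hfin : ∀ T : Set (Finset G.edgeSet), T.Finite := fun T => Set.toFinite T
  rw [hsplit, Set.ncard_union_eq d123 ((hfin _).union (hfin _)) (hfin _),
    Set.ncard_union_eq d12 (hfin _) (hfin _)]
  have h1 : S1.ncard = (G.degree u - 1).choose 2 := star_count G u w huw
  have h2 : S2.ncard = (G.degree w - 1).choose 2 := by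
    have h := star_count G w u huw.symm
    have he : (⟨s(w, u), G.mem_edgeSet.mpr huw.symm⟩ : G.edgeSet) = e₀ :=
      Subtype.ext (Sym2.eq_swap)
    rw [he] at h
    exact h
  have h3 : S3.ncard = {v : V | G.Adj u v ∧ G.Adj w v}.ncard := tri_count G u w huw
  rw [h1, h2, h3]
  omega
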